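/- Let b, N be positive integers and let A(b,N) = { (bNu - v)/(bNu) : u, v positive integers, 0 < v ≤ bN } \ {0}. Then A(b,N) satisfies the descending chain condition: every strictly decreasing sequence in A(b,N) is finite (equivalently, A(b,N) has no infinite strictly decreasing sequence). -/
import Mathlib


/-- The coefficient set A(b,N) from the canonical bundle formula. -/
def Abn (b N : ℕ) : Set ℚ :=
  {x | (∃ u v : ℕ, 0 < u ∧ 0 < v ∧ v ≤ b * N ∧
      x = ((b : ℚ) * N * u - v) / ((b : ℚ) * N * u)) ∧ x ≠ 0}

/-- A(b,N) satisfies the descending chain condition: there is no infinite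
strictly decreasing sequence of elements of A(b,N). -/
theorem stmt1 (b N : ℕ) (hb : 0 < b) (hN : 0 < N) :
    ¬ ∃ f : ℕ → ℚ, (∀ n, f n ∈ Abn b N) ∧ StrictAnti f := by
  rintro ⟨f, hf, hanti⟩
  set q : ℚ := (b : ℚ) * N with hq
  have hq0 : 0 < q := by
    have : (0:ℚ) < (b:ℚ) := by exact_mod_cast hb
    have : (0:ℚ) < (N:ℚ) := by exact_mod_cast hN
    positivity
  -- every element of A is < 1
  have hlt1 : ∀ n, f n < 1 := by
    intro n
    obtain ⟨⟨u, v, hu, hv, hvb, hx⟩, -⟩ := hf n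
    rw [← hq] at hx
    have hu' : (0:ℚ) < u := by exact_mod_cast hu
    have hv' : (0:ℚ) < v := by exact_mod_cast hv
    rw [hx, div_lt_one (mul_pos hq0 hu')]
    linarith
  set c : ℚ := f 1 with hc
  have hc1 : c < 1 := hlt1 1
  have hcpos : 0 < 1 - c := by linarith
  set U : ℕ := ⌈(1:ℚ) / (1 - c)⌉₊ with hU
  set S : Set ℚ := (fun p : ℕ × ℕ => (q * p.1 - p.2) / (q * p.1)) ''
      (Set.Icc 0 U ×ˢ Set.Icc 0 (b * N)) with hS
  have hSfin : S.Finite :=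
    ((Set.finite_Icc 0 U).prod (Set.finite_Icc 0 (b * N))).image _
  have hsub : Set.Ici 1 ⊆ {n | f n ∈ S} := by
    intro n hn
    obtain ⟨⟨u, v, hu, hv, hvb, hx⟩, -⟩ := hf n
    rw [← hq] at hx
    have hu' : (0:ℚ) < u := by exact_mod_cast hu
    have hfc : f n ≤ c := hanti.antitone hn
    have hle : (q * u - v) / (q * u) ≤ c := by rw [← hx]; exact hfc
    rw [div_le_iff₀ (mul_pos hq0 hu')] at hle
    have hv' : (v:ℚ) ≤ q := by
      rw [hq]; exact_mod_cast hvb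
    -- q * u * (1 - c) ≤ v ≤ q, so u * (1 - c) ≤ 1
    have huc : (u:ℚ) * (1 - c) ≤ 1 := by
      have h1 : q * ((u:ℚ) * (1 - c)) ≤ q * 1 := by ring_nf; nlinarith
      exact le_of_mul_le_mul_left h1 hq0
    have huU : u ≤ U := by
      have h2 : (u:ℚ) ≤ 1 / (1 - c) := (le_div_iff₀ hcpos).mpr huc
      have h3 : (1:ℚ) / (1 - c) ≤ (U:ℚ) := Nat.le_ceil _
      exact_mod_cast h2.trans h3
    exact ⟨(u, v), ⟨⟨Nat.zero_le _, huU⟩, ⟨Nat.zero_le _, hvb⟩⟩, hx.symm⟩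
  have hpre : {n | f n ∈ S}.Finite :=
    hSfin.preimage (hanti.injective.injOn)
  exact (Set.Ici_infinite 1) (hpre.subset hsub)
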